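/- (Huber; Lemma 1(iii)) For every ε ∈ (0,1) and every measurable set A ⊆ Ψ, the range of the posterior probability of A over all ε-contaminations of the marginal prior satisfies δ(A) = Π(A|x) ε* (r(A^c) − r(A)) / ((1 + ε* r(A))(1 + ε* r(A^c))) + ε* r(A) / (1 + ε* r(A)). -/

import Mathlib

open MeasureTheory Set

variable {Ω : Type*} [MeasurableSpace Ω]

/-- The posterior probability of a set `A` when the prior is `μ` and the likelihood
(conditional prior predictive density `ψ ↦ m(x|ψ)`) is `f`. -/
noncomputable def postProb (f : Ω → ℝ) (μ : Measure Ω) (A : Set Ω) : ℝ :=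
  (∫ ψ in A, f ψ ∂μ) / (∫ ψ, f ψ ∂μ)

/-- The ε-contaminated prior `(1−ε)P + εQ`. -/
noncomputable def contam (P Q : Measure Ω) (ε : ℝ) : Measure Ω :=
  ENNReal.ofReal (1 - ε) • P + ENNReal.ofReal ε • Q

/-- `r(A) = sup_{ψ ∈ A} f(ψ) / m` (equal to `0` when `A = ∅` since `Real.sSup ∅ = 0`). -/
noncomputable def rSup (f : Ω → ℝ) (P : Measure Ω) (A : Set Ω) : ℝ :=
  sSup (f '' A) / ∫ ψ, f ψ ∂P

/-- The upper posterior probability over all ε-contaminations. -/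
noncomputable def upperPost (f : Ω → ℝ) (P : Measure Ω) (ε : ℝ) (A : Set Ω) : ℝ :=
  ⨆ Q : ProbabilityMeasure Ω, postProb f (contam P (Q : Measure Ω) ε) A


/-- The lower posterior probability over all ε-contaminations. -/
noncomputable def lowerPost (f : Ω → ℝ) (P : Measure Ω) (ε : ℝ) (A : Set Ω) : ℝ :=
  ⨅ Q : ProbabilityMeasure Ω, postProb f (contam P (Q : Measure Ω) ε) A

/-- `δ(A) = Π^{upper}(A|x) − Π^{lower}(A|x)`. -/
noncomputable def deltaPost (f : Ω → ℝ) (P : Measure Ω) (ε : ℝ) (A : Set Ω) : ℝ :=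
  upperPost f P ε A - lowerPost f P ε A

private lemma frac_le_frac' {n d x x' : ℝ} (hn : 0 ≤ n) (hnd : n ≤ d) (hd : 0 < d)
    (hx : 0 ≤ x) (hxx : x ≤ x') : (n + x) / (d + x) ≤ (n + x') / (d + x') := by
  rw [div_le_div_iff₀ (by linarith) (by linarith)]
  nlinarith

private lemma frac_le_aux' {n d x y s : ℝ} (hn : 0 ≤ n) (hnd : n ≤ d) (hd : 0 < d)
    (hx : 0 ≤ x) (hy : 0 ≤ y) (hxs : x ≤ s) :
    (n + x) / (d + x + y) ≤ (n + s) / (d + s) := by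
  calc (n + x) / (d + x + y) ≤ (n + x) / (d + x) := by
        rw [div_le_div_iff₀ (by linarith) (by linarith)]
        nlinarith
    _ ≤ (n + s) / (d + s) := frac_le_frac' hn hnd hd hx hxs

private lemma frac_ge_aux' {n d x y s : ℝ} (hn : 0 ≤ n) (hnd : n ≤ d) (hd : 0 < d)
    (hx : 0 ≤ x) (hy : 0 ≤ y) (hys : y ≤ s) :
    n / (d + s) ≤ (n + x) / (d + x + y) := by
  rw [div_le_div_iff₀ (by linarith) (by linarith)]
  nlinarith

private lemma integral_contam' (f : Ω → ℝ) {P Q : Measure Ω} (hP : Integrable f P)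
    (hQ : Integrable f Q) {ε : ℝ} (hε0 : 0 ≤ ε) (hε1 : ε ≤ 1) :
    ∫ ψ, f ψ ∂(contam P Q ε) = (1 - ε) * ∫ ψ, f ψ ∂P + ε * ∫ ψ, f ψ ∂Q := by
  unfold contam
  rw [integral_add_measure (hP.smul_measure ENNReal.ofReal_ne_top)
    (hQ.smul_measure ENNReal.ofReal_ne_top), integral_smul_measure, integral_smul_measure,
    ENNReal.toReal_ofReal (by linarith), ENNReal.toReal_ofReal hε0, smul_eq_mul, smul_eq_mul]

private lemma setIntegral_contam' (f : Ω → ℝ) {P Q : Measure Ω} (hP : Integrable f P)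
    (hQ : Integrable f Q) {ε : ℝ} (hε0 : 0 ≤ ε) (hε1 : ε ≤ 1) (A : Set Ω) :
    ∫ ψ in A, f ψ ∂(contam P Q ε)
      = (1 - ε) * ∫ ψ in A, f ψ ∂P + ε * ∫ ψ in A, f ψ ∂Q := by
  have h : (contam P Q ε).restrict A = contam (P.restrict A) (Q.restrict A) ε := by
    unfold contam
    rw [Measure.restrict_add, Measure.restrict_smul, Measure.restrict_smul]
  rw [h]
  exact integral_contam' f hP.restrict hQ.restrict hε0 hε1

/-- Huber's Lemma 1 (iii):
`δ(A) = Π(A|x) ε* (r(Aᶜ) − r(A)) / ((1 + ε* r(A))(1 + ε* r(Aᶜ))) + ε* r(A)/(1 + ε* r(A))`. -/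
theorem deltaPost_eq
    (f : Ω → ℝ) (hf : Measurable f) (hf0 : ∀ ψ, 0 ≤ f ψ)
    (C : ℝ) (hfC : ∀ ψ, f ψ ≤ C)
    (P : Measure Ω) [IsProbabilityMeasure P]
    (hm : 0 < ∫ ψ, f ψ ∂P)
    (ε : ℝ) (hε : ε ∈ Set.Ioo (0 : ℝ) 1)
    (A : Set Ω) (hA : MeasurableSet A) :
    deltaPost f P ε A =
      postProb f P A * (ε / (1 - ε)) * (rSup f P Aᶜ - rSup f P A) /
          ((1 + (ε / (1 - ε)) * rSup f P A) * (1 + (ε / (1 - ε)) * rSup f P Aᶜ)) +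
        (ε / (1 - ε)) * rSup f P A / (1 + (ε / (1 - ε)) * rSup f P A) := by
  classical
  obtain ⟨hε0, hε1⟩ := hε
  have h1ε : 0 < 1 - ε := by linarith
  have hΩ : Nonempty Ω := by
    by_contra h
    rw [not_nonempty_iff] at h
    have h1 : P univ = 1 := measure_univ
    rw [Set.univ_eq_empty_iff.mpr h, measure_empty] at h1
    exact zero_ne_one h1
  obtain ⟨ψ₀⟩ := id hΩ
  haveI hPM : Nonempty (ProbabilityMeasure Ω) := ⟨⟨Measure.dirac ψ₀, inferInstance⟩⟩
  set m := ∫ ψ, f ψ ∂P with hm_def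
  set a := ∫ ψ in A, f ψ ∂P with ha_def
  set s := sSup (f '' A) with hs_def
  set s' := sSup (f '' Aᶜ) with hs'_def
  have hnorm : ∀ ψ, ‖f ψ‖ ≤ C := fun ψ => by
    rw [Real.norm_eq_abs, abs_of_nonneg (hf0 ψ)]; exact hfC ψ
  have hint : ∀ (μ : Measure Ω) [IsProbabilityMeasure μ], Integrable f μ := fun μ _ =>
    (integrable_const C).mono' hf.aestronglyMeasurable (ae_of_all _ hnorm)
  have hintP : Integrable f P := hint P
  have ha0 : 0 ≤ a := setIntegral_nonneg hA fun ψ _ => hf0 ψ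
  have ham : a ≤ m := setIntegral_le_integral hintP (ae_of_all _ hf0)
  have hbdd : ∀ B : Set Ω, BddAbove (f '' B) := fun B =>
    ⟨C, by rintro _ ⟨ψ, _, rfl⟩; exact hfC ψ⟩
  have hsSup_nonneg : ∀ B : Set Ω, 0 ≤ sSup (f '' B) := by
    intro B
    rcases B.eq_empty_or_nonempty with rfl | ⟨ψ, hψ⟩
    · simp [Real.sSup_empty]
    · exact (hf0 ψ).trans (le_csSup (hbdd B) ⟨ψ, hψ, rfl⟩)
  have hs0 : 0 ≤ s := hsSup_nonneg A
  have hs'0 : 0 ≤ s' := hsSup_nonneg Aᶜ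
  have hxle : ∀ (B : Set Ω), MeasurableSet B → ∀ Q : ProbabilityMeasure Ω,
      ∫ ψ in B, f ψ ∂(Q : Measure Ω) ≤ sSup (f '' B) := by
    intro B hB Q
    rcases B.eq_empty_or_nonempty with rfl | hne
    · simp [Real.sSup_empty]
    · calc ∫ ψ in B, f ψ ∂(Q : Measure Ω)
          ≤ ∫ _ in B, sSup (f '' B) ∂(Q : Measure Ω) :=
            setIntegral_mono_on (hint (Q : Measure Ω)).integrableOn
              (integrableOn_const (measure_ne_top _ _)) hB
              (fun x hx => le_csSup (hbdd B) ⟨x, hx, rfl⟩)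
        _ = ((Q : Measure Ω) B).toReal * sSup (f '' B) := by
            rw [setIntegral_const, smul_eq_mul]; rfl
        _ ≤ 1 * sSup (f '' B) := by
            apply mul_le_mul_of_nonneg_right _ (hsSup_nonneg B)
            calc ((Q : Measure Ω) B).toReal ≤ (1 : ENNReal).toReal :=
                  ENNReal.toReal_mono ENNReal.one_ne_top prob_le_one
              _ = 1 := by simp
        _ = sSup (f '' B) := one_mul _
  have key : ∀ Q : ProbabilityMeasure Ω, postProb f (contam P (Q : Measure Ω) ε) A =
      ((1 - ε) * a + ε * ∫ ψ in A, f ψ ∂(Q : Measure Ω)) /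
        ((1 - ε) * m + ε * ∫ ψ, f ψ ∂(Q : Measure Ω)) := by
    intro Q
    unfold postProb
    rw [setIntegral_contam' f hintP (hint (Q : Measure Ω)) hε0.le hε1.le,
      integral_contam' f hintP (hint (Q : Measure Ω)) hε0.le hε1.le]
  have hd : 0 < (1 - ε) * m := mul_pos h1ε hm
  have hn0 : 0 ≤ (1 - ε) * a := mul_nonneg h1ε.le ha0
  have hnd : (1 - ε) * a ≤ (1 - ε) * m := mul_le_mul_of_nonneg_left ham h1ε.le
  -- upper bound for each Q
  have hub : ∀ Q : ProbabilityMeasure Ω, postProb f (contam P (Q : Measure Ω) ε) A ≤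
      ((1 - ε) * a + ε * s) / ((1 - ε) * m + ε * s) := by
    intro Q
    rw [key Q]
    have hsplit : ∫ ψ, f ψ ∂(Q : Measure Ω)
        = (∫ ψ in A, f ψ ∂(Q : Measure Ω)) + ∫ ψ in Aᶜ, f ψ ∂(Q : Measure Ω) :=
      (integral_add_compl hA (hint (Q : Measure Ω))).symm
    rw [hsplit]
    have hrw : (1 - ε) * m + ε * ((∫ ψ in A, f ψ ∂(Q : Measure Ω)) +
        ∫ ψ in Aᶜ, f ψ ∂(Q : Measure Ω))
        = (1 - ε) * m + ε * (∫ ψ in A, f ψ ∂(Q : Measure Ω)) +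
          ε * ∫ ψ in Aᶜ, f ψ ∂(Q : Measure Ω) := by ring
    rw [hrw]
    exact frac_le_aux' hn0 hnd hd
      (mul_nonneg hε0.le (setIntegral_nonneg hA fun ψ _ => hf0 ψ))
      (mul_nonneg hε0.le (setIntegral_nonneg hA.compl fun ψ _ => hf0 ψ))
      (mul_le_mul_of_nonneg_left (hxle A hA Q) hε0.le)
  have hBddAbove : BddAbove (range fun Q : ProbabilityMeasure Ω =>
      postProb f (contam P (Q : Measure Ω) ε) A) :=
    ⟨_, by rintro _ ⟨Q, rfl⟩; exact hub Q⟩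
  have hBddBelow : BddBelow (range fun Q : ProbabilityMeasure Ω =>
      postProb f (contam P (Q : Measure Ω) ε) A) := by
    refine ⟨0, ?_⟩
    rintro _ ⟨Q, rfl⟩
    exact div_nonneg (setIntegral_nonneg hA fun ψ _ => hf0 ψ) (integral_nonneg hf0)
  -- value of the posterior at a dirac contamination
  have hdirac_val : ∀ ψ : Ω, postProb f (contam P (Measure.dirac ψ) ε) A =
      ((1 - ε) * a + ε * if ψ ∈ A then f ψ else 0) / ((1 - ε) * m + ε * f ψ) := by
    intro ψ
    have hQ : Integrable f (Measure.dirac ψ) := hint (Measure.dirac ψ)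
    unfold postProb
    rw [setIntegral_contam' f hintP hQ hε0.le hε1.le,
      integral_contam' f hintP hQ hε0.le hε1.le,
      integral_dirac' f ψ hf.stronglyMeasurable,
      setIntegral_dirac' hf.stronglyMeasurable ψ hA]
  -- upper posterior
  have hU : upperPost f P ε A = ((1 - ε) * a + ε * s) / ((1 - ε) * m + ε * s) := by
    refine le_antisymm (ciSup_le hub) ?_
    rcases A.eq_empty_or_nonempty with hAe | hAne
    · have hs : s = 0 := by rw [hs_def, hAe]; simp [Real.sSup_empty]
      have ha : a = 0 := by rw [ha_def, hAe]; simp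
      rw [hs, ha]
      simp only [mul_zero, add_zero, zero_div]
      obtain ⟨ψ⟩ := hΩ
      have h0 : (0 : ℝ) ≤ postProb f (contam P ((⟨Measure.dirac ψ, inferInstance⟩ :
          ProbabilityMeasure Ω) : Measure Ω) ε) A :=
        div_nonneg (setIntegral_nonneg hA fun ψ _ => hf0 ψ) (integral_nonneg hf0)
      exact h0.trans (le_ciSup hBddAbove (⟨Measure.dirac ψ, inferInstance⟩ :
        ProbabilityMeasure Ω))
    · set g : ℝ → ℝ :=
        fun t => ((1 - ε) * a + ε * max t 0) / ((1 - ε) * m + ε * max t 0) with hg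
      have hgmono : Monotone g := fun t t' htt' =>
        frac_le_frac' hn0 hnd hd (mul_nonneg hε0.le (le_max_right _ _))
          (mul_le_mul_of_nonneg_left (max_le_max htt' le_rfl) hε0.le)
      have hgcont : ContinuousAt g s := by
        apply ContinuousAt.div
        · exact (continuous_const.add (continuous_const.mul
            (continuous_id.max continuous_const))).continuousAt
        · exact (continuous_const.add (continuous_const.mul
            (continuous_id.max continuous_const))).continuousAt
        · exact (add_pos_of_pos_of_nonneg hd
            (mul_nonneg hε0.le (le_max_right _ _))).ne'
      have himg : g s = sSup (g '' (f '' A)) := by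
        rw [hs_def]
        exact hgmono.map_csSup_of_continuousAt (by rw [← hs_def]; exact hgcont)
          (hAne.image f) (hbdd A)
      have hle : g s ≤ upperPost f P ε A := by
        rw [himg]
        apply csSup_le ((hAne.image f).image g)
        rintro b ⟨t, ⟨ψ, hψA, rfl⟩, rfl⟩
        have hval : g (f ψ) = postProb f (contam P ((⟨Measure.dirac ψ, inferInstance⟩ :
            ProbabilityMeasure Ω) : Measure Ω) ε) A := by
          show g (f ψ) = postProb f (contam P (Measure.dirac ψ) ε) A
          rw [hdirac_val ψ, if_pos hψA, hg]
          simp only [max_eq_left (hf0 ψ)]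
        rw [hval]
        exact le_ciSup hBddAbove (⟨Measure.dirac ψ, inferInstance⟩ : ProbabilityMeasure Ω)
      have hgs : g s = ((1 - ε) * a + ε * s) / ((1 - ε) * m + ε * s) := by
        rw [hg]; simp only [max_eq_left hs0]
      rw [← hgs]
      exact hle
  -- lower posterior
  have hL : lowerPost f P ε A = (1 - ε) * a / ((1 - ε) * m + ε * s') := by
    have hlb : ∀ Q : ProbabilityMeasure Ω, (1 - ε) * a / ((1 - ε) * m + ε * s') ≤
        postProb f (contam P (Q : Measure Ω) ε) A := by
      intro Q
      rw [key Q]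
      have hsplit : ∫ ψ, f ψ ∂(Q : Measure Ω)
          = (∫ ψ in A, f ψ ∂(Q : Measure Ω)) + ∫ ψ in Aᶜ, f ψ ∂(Q : Measure Ω) :=
        (integral_add_compl hA (hint (Q : Measure Ω))).symm
      rw [hsplit]
      have hrw : (1 - ε) * m + ε * ((∫ ψ in A, f ψ ∂(Q : Measure Ω)) +
          ∫ ψ in Aᶜ, f ψ ∂(Q : Measure Ω))
          = (1 - ε) * m + ε * (∫ ψ in A, f ψ ∂(Q : Measure Ω)) +
            ε * ∫ ψ in Aᶜ, f ψ ∂(Q : Measure Ω) := by ring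
      rw [hrw]
      exact frac_ge_aux' hn0 hnd hd
        (mul_nonneg hε0.le (setIntegral_nonneg hA fun ψ _ => hf0 ψ))
        (mul_nonneg hε0.le (setIntegral_nonneg hA.compl fun ψ _ => hf0 ψ))
        (mul_le_mul_of_nonneg_left (hxle Aᶜ hA.compl Q) hε0.le)
    refine le_antisymm ?_ (le_ciInf hlb)
    rcases Aᶜ.eq_empty_or_nonempty with hAe | hAne
    · have hAuniv : A = univ := by rwa [compl_empty_iff] at hAe
      have hs' : s' = 0 := by rw [hs'_def, hAe]; simp [Real.sSup_empty]
      have ha : a = m := by rw [ha_def, hAuniv, setIntegral_univ]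
      rw [hs', ha]
      simp only [mul_zero, add_zero]
      rw [div_self hd.ne']
      obtain ⟨Q⟩ := id hPM
      refine ciInf_le_of_le hBddBelow Q ?_
      rw [key Q, ha]
      have hx : ∫ ψ in A, f ψ ∂(Q : Measure Ω) ≤ ∫ ψ, f ψ ∂(Q : Measure Ω) :=
        setIntegral_le_integral (hint _) (ae_of_all _ hf0)
      have hmul := mul_le_mul_of_nonneg_left hx hε0.le
      apply div_le_one_of_le₀
      · linarith
      · exact add_nonneg hd.le (mul_nonneg hε0.le (integral_nonneg hf0))
    · set g' : ℝ → ℝ :=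
        fun t => (1 - ε) * a / ((1 - ε) * m + ε * max t 0) with hg'
      have hg'anti : Antitone g' := by
        intro t t' htt'
        have h1 : 0 < (1 - ε) * m + ε * max t 0 :=
          add_pos_of_pos_of_nonneg hd (mul_nonneg hε0.le (le_max_right _ _))
        have h2 : 0 < (1 - ε) * m + ε * max t' 0 :=
          add_pos_of_pos_of_nonneg hd (mul_nonneg hε0.le (le_max_right _ _))
        rw [hg']
        simp only
        rw [div_le_div_iff₀ h2 h1]
        have hmax : max t 0 ≤ max t' 0 := max_le_max htt' le_rfl
        nlinarith [mul_le_mul_of_nonneg_left (mul_le_mul_of_nonneg_left hmax hε0.le) hn0]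
      have hg'cont : ContinuousAt g' s' := by
        apply ContinuousAt.div
        · exact continuous_const.continuousAt
        · exact (continuous_const.add (continuous_const.mul
            (continuous_id.max continuous_const))).continuousAt
        · exact (add_pos_of_pos_of_nonneg hd
            (mul_nonneg hε0.le (le_max_right _ _))).ne'
      have himg' : g' s' = sInf (g' '' (f '' Aᶜ)) := by
        rw [hs'_def]
        exact hg'anti.map_csSup_of_continuousAt (by rw [← hs'_def]; exact hg'cont)
          (hAne.image f) (hbdd Aᶜ)
      have hle' : lowerPost f P ε A ≤ g' s' := by
        rw [himg']
        apply le_csInf ((hAne.image f).image g')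
        rintro b ⟨t, ⟨ψ, hψA, rfl⟩, rfl⟩
        have hval : g' (f ψ) = postProb f (contam P ((⟨Measure.dirac ψ, inferInstance⟩ :
            ProbabilityMeasure Ω) : Measure Ω) ε) A := by
          show g' (f ψ) = postProb f (contam P (Measure.dirac ψ) ε) A
          rw [hdirac_val ψ, if_neg hψA, hg']
          simp only [max_eq_left (hf0 ψ), mul_zero, add_zero]
        rw [hval]
        exact ciInf_le hBddBelow (⟨Measure.dirac ψ, inferInstance⟩ : ProbabilityMeasure Ω)
      have hgs' : g' s' = (1 - ε) * a / ((1 - ε) * m + ε * s') := by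
        rw [hg']; simp only [max_eq_left hs'0]
      rw [← hgs']
      exact hle'
  -- final algebra
  unfold deltaPost
  rw [hU, hL]
  unfold postProb rSup
  rw [← hm_def, ← ha_def, ← hs_def, ← hs'_def]
  have hden1 : 0 < (1 - ε) * m + ε * s :=
    add_pos_of_pos_of_nonneg hd (mul_nonneg hε0.le hs0)
  have hden2 : 0 < (1 - ε) * m + ε * s' :=
    add_pos_of_pos_of_nonneg hd (mul_nonneg hε0.le hs'0)
  have hq1 : 0 < 1 + ε / (1 - ε) * (s / m) := by
    have : 0 ≤ ε / (1 - ε) * (s / m) :=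
      mul_nonneg (div_nonneg hε0.le h1ε.le) (div_nonneg hs0 hm.le)
    linarith
  have hq2 : 0 < 1 + ε / (1 - ε) * (s' / m) := by
    have : 0 ≤ ε / (1 - ε) * (s' / m) :=
      mul_nonneg (div_nonneg hε0.le h1ε.le) (div_nonneg hs'0 hm.le)
    linarith
  have hm' : m ≠ 0 := hm.ne'
  have h1ε' : (1 : ℝ) - ε ≠ 0 := h1ε.ne'
  field_simp
  ring
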